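/- arXiv:1910.04321 — 4 statements merged into one kernel-verified Lean document; each statement's English description precedes it below -/
import Mathlib

section
/- Let D = (E, ℱ) be a set system and let e₁, e₂ ∈ E. Then (D + e₁) + e₂ = (D + e₂) + e₁; that is, loop complementation operations on distinct or equal elements commute, so loop complementation on a subset A ⊆ E is well-defined independently of the order in which its elements are processed. -/
/-!
Statement 1: Loop complementations on elements `e₁, e₂` of the ground set commute:
`(D + e₁) + e₂ = (D + e₂) + e₁`.
-/

open scoped symmDiff

variable {α : Type*} [DecidableEq α]

/-- Loop complementation of a collection of feasible sets on an element `e`: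
`ℱ △ { F ∪ {e} : F ∈ ℱ, e ∉ F }`. -/
def loopComp (F : Set (Finset α)) (e : α) : Set (Finset α) :=
  F ∆ {X | ∃ Y ∈ F, e ∉ Y ∧ X = insert e Y}

lemma mem_loopComp (F : Set (Finset α)) (e : α) (X : Finset α) :
    X ∈ loopComp F e ↔ Xor' (X ∈ F) (e ∈ X ∧ X.erase e ∈ F) := by
  have h : X ∈ {X | ∃ Y ∈ F, e ∉ Y ∧ X = insert e Y} ↔ (e ∈ X ∧ X.erase e ∈ F) := by
    constructor
    · rintro ⟨Y, hY, heY, rfl⟩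
      simp [Finset.erase_insert heY, hY]
    · rintro ⟨he, hY⟩
      exact ⟨X.erase e, hY, Finset.notMem_erase e X, (Finset.insert_erase he).symm⟩
  rw [loopComp, Set.mem_symmDiff, h, Xor', xor_def]

lemma loopComp_aux (a b c d p q : Prop) :
    Xor' (Xor' a (p ∧ b)) (q ∧ Xor' c (p ∧ d)) ↔
      Xor' (Xor' a (q ∧ c)) (p ∧ Xor' b (q ∧ d)) := by
  by_cases hp : p <;> by_cases hq : q <;> simp [hp, hq, Xor', xor_def] <;> tauto

/-- Loop complementation operations commute. -/
theorem loopComp_comm (E : Finset α) (F : Set (Finset α)) (hF : ∀ X ∈ F, X ⊆ E)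
    (e₁ e₂ : α) (he₁ : e₁ ∈ E) (he₂ : e₂ ∈ E) :
    loopComp (loopComp F e₁) e₂ = loopComp (loopComp F e₂) e₁ := by
  by_cases h : e₁ = e₂
  · subst h; rfl
  ext X
  simp only [mem_loopComp, Finset.erase_right_comm (a := e₂) (b := e₁),
    show e₂ ∈ X.erase e₁ ↔ e₂ ∈ X by simp [Finset.mem_erase, Ne.symm h],
    show e₁ ∈ X.erase e₂ ↔ e₁ ∈ X by simp [Finset.mem_erase, h]]
  exact loopComp_aux _ _ _ _ _ _
end

section
/- Let 𝐀 be a symmetric matrix over a field whose rows and columns are indexed (in the same order) by a finite set E, and let ℱ = {X ⊆ E : 𝐀[X] is nonsingular}, where 𝐀[∅] is considered nonsingular by convention. Then D(𝐀) = (E, ℱ) is a delta-matroid. -/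
/-!
Statement 2: For a symmetric matrix `𝐀` over a field with rows and columns indexed by
a finite set `E`, the set system `D(𝐀) = (E, {X ⊆ E : 𝐀[X] nonsingular})` is a
delta-matroid.
-/

open scoped symmDiff

variable {α : Type*} [DecidableEq α]

/-- A collection of feasible sets satisfies the Symmetric Exchange Axiom. -/
def SatisfiesSEA (F : Set (Finset α)) : Prop :=
  ∀ X ∈ F, ∀ Y ∈ F, ∀ u ∈ X ∆ Y, ∃ v ∈ X ∆ Y, X ∆ ({u, v} : Finset α) ∈ F

/-- The set system `(E, F)` is a delta-matroid. -/
def IsDeltaMatroid (E : Finset α) (F : Set (Finset α)) : Prop :=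
  F.Nonempty ∧ (∀ X ∈ F, X ⊆ E) ∧ SatisfiesSEA F

/-- The feasible sets of the set system `D(𝐀)` determined by a matrix `𝐀` with rows
and columns indexed by `E`: a set `X` is feasible precisely when the principal
submatrix `𝐀[X]` is nonsingular (the empty submatrix has determinant `1`, so `∅` is
feasible by convention). -/
def matFeasible {E : Type*} [Fintype E] [DecidableEq E] {K : Type*} [Field K]
    (A : Matrix E E K) : Set (Finset E) :=
  {X | (A.submatrix (fun i : X => (i : E)) (fun j : X => (j : E))).det ≠ 0}


section Aux
open Matrix
variable {E : Type*} [Fintype E] [DecidableEq E] {K : Type*} [Field K]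

def dmMask (A : Matrix E E K) (Z : Finset E) : Matrix E E K :=
  Matrix.of fun e f => if e ∈ Z then A e f else if e = f then (1 : K) else 0

lemma dm_det_ne_zero_iff_ker (M : Matrix E E K) :
    M.det ≠ 0 ↔ ∀ v, M *ᵥ v = 0 → v = 0 := by
  constructor
  · intro hdet v hv
    by_contra hv0
    exact hdet (Matrix.exists_mulVec_eq_zero_iff.mp ⟨v, hv0, hv⟩)
  · intro h hdet
    obtain ⟨v, hv0, hv⟩ := Matrix.exists_mulVec_eq_zero_iff.mpr hdet
    exact hv0 (h v hv)

lemma dmMask_mulVec (A : Matrix E E K) (Z : Finset E) (v : E → K) (e : E) :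
    (dmMask A Z *ᵥ v) e = if e ∈ Z then (A *ᵥ v) e else v e := by
  simp only [dmMask, Matrix.mulVec, dotProduct, Matrix.of_apply]
  by_cases he : e ∈ Z
  · simp [he]
  · rw [if_neg he]
    rw [Finset.sum_congr rfl (fun f _ => by rw [if_neg he, ite_mul, one_mul, zero_mul]),
      Finset.sum_ite_eq]
    simp

lemma dm_sum_restrict (Z : Finset E) (g : E → K) (hg : ∀ e ∉ Z, g e = 0) :
    ∑ f, g f = ∑ j : Z, g j := by
  rw [Finset.sum_coe_sort Z g]
  exact (Finset.sum_subset (Finset.subset_univ Z) (fun x _ hx => hg x hx)).symm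

lemma dmMask_det_iff (A : Matrix E E K) (Z : Finset E) :
    (dmMask A Z).det ≠ 0 ↔
      (A.submatrix (fun i : Z => (i : E)) (fun j : Z => (j : E))).det ≠ 0 := by
  rw [dm_det_ne_zero_iff_ker, dm_det_ne_zero_iff_ker]
  constructor
  · intro h w hw
    set v : E → K := fun e => if h : e ∈ Z then w ⟨e, h⟩ else 0 with hvdef
    have hv0 : ∀ e ∉ Z, v e = 0 := fun e he => dif_neg he
    have hv : dmMask A Z *ᵥ v = 0 := by
      funext e
      rw [Pi.zero_apply, dmMask_mulVec]
      by_cases he : e ∈ Z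
      · rw [if_pos he]
        have h2 := congrFun hw ⟨e, he⟩
        simp only [Matrix.mulVec, dotProduct, Matrix.submatrix_apply,
          Pi.zero_apply] at h2 ⊢
        rw [dm_sum_restrict Z (fun f => A e f * v f)
          (fun f hf => by rw [hv0 f hf, mul_zero])]
        rw [← h2]
        exact Finset.sum_congr rfl fun j _ => by simp [hvdef]
      · rw [if_neg he]; exact hv0 e he
    have hv' := h v hv
    funext i
    have := congrFun hv' (i : E)
    simpa [hvdef] using this
  · intro h v hv
    have hv0 : ∀ e ∉ Z, v e = 0 := by
      intro e he
      have := congrFun hv e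
      rwa [Pi.zero_apply, dmMask_mulVec, if_neg he] at this
    have hker : A.submatrix (fun i : Z => (i : E)) (fun j : Z => (j : E)) *ᵥ
        (fun j : Z => v j) = 0 := by
      funext i
      have := congrFun hv (i : E)
      rw [Pi.zero_apply, dmMask_mulVec, if_pos i.2] at this
      simp only [Matrix.mulVec, dotProduct, Matrix.submatrix_apply, Pi.zero_apply]
      rw [← dm_sum_restrict Z (fun f => A (i : E) f * v f)
        (fun f hf => by rw [hv0 f hf, mul_zero])]
      simpa [Matrix.mulVec, dotProduct] using this
    have := h _ hker
    funext e
    by_cases he : e ∈ Z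
    · exact congrFun this ⟨e, he⟩
    · exact hv0 e he

lemma dmMask_mul (A : Matrix E E K) (X Z : Finset E) (hX : IsUnit (dmMask A X).det) :
    dmMask (dmMask A Xᶜ * (dmMask A X)⁻¹) Z * dmMask A X = dmMask A (X ∆ Z) := by
  have hCM : (dmMask A Xᶜ * (dmMask A X)⁻¹) * dmMask A X = dmMask A Xᶜ := by
    rw [Matrix.mul_assoc, Matrix.nonsing_inv_mul _ hX, Matrix.mul_one]
  ext e f
  by_cases he : e ∈ Z
  · have h1 : (dmMask (dmMask A Xᶜ * (dmMask A X)⁻¹) Z * dmMask A X) e f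
        = ((dmMask A Xᶜ * (dmMask A X)⁻¹) * dmMask A X) e f := by
      rw [Matrix.mul_apply, Matrix.mul_apply]
      exact Finset.sum_congr rfl fun g _ => by rw [dmMask]; simp [he]
    rw [h1, hCM]
    by_cases hx : e ∈ X <;>
      simp [dmMask, Finset.mem_symmDiff, Finset.mem_compl, he, hx]
  · have h1 : (dmMask (dmMask A Xᶜ * (dmMask A X)⁻¹) Z * dmMask A X) e f
        = dmMask A X e f := by
      rw [Matrix.mul_apply]
      rw [Finset.sum_congr rfl (fun g _ => by
        rw [show dmMask (dmMask A Xᶜ * (dmMask A X)⁻¹) Z e g * dmMask A X g f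
            = if e = g then dmMask A X g f else 0 by
          rw [dmMask]; simp [he, ite_mul]])]
      rw [Finset.sum_ite_eq]
      simp
    rw [h1]
    by_cases hx : e ∈ X <;>
      simp [dmMask, Finset.mem_symmDiff, he, hx]

lemma dm_entry_lhs (A : Matrix E E K) (haij : ∀ i j : E, A i j = A j i)
    (X : Finset E) (a b g : E) :
    (if g ∈ X then A g a else if g = a then (1:K) else 0) *
      ((if g ∈ X then (-1:K) else 1) *
        (if g ∉ X then A g b else if g = b then (1:K) else 0)) =
    (if g = b then (if b ∈ X then -(A b a) else 0) else 0)
      + (if g = a then (if a ∈ X then 0 else A a b) else 0) := by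
  by_cases hg : g ∈ X <;> by_cases hgb : g = b <;> by_cases hga : g = a <;>
    subst_eqs <;> simp_all <;> ring_nf <;> simp [haij]

lemma dmMask_sign (A : Matrix E E K) (hA : A.IsSymm) (X : Finset E)
    (hX : IsUnit (dmMask A X).det) (u v : E) :
    (if u ∈ X then (-1 : K) else 1) * (dmMask A Xᶜ * (dmMask A X)⁻¹) u v
      = (if v ∈ X then (-1 : K) else 1) * (dmMask A Xᶜ * (dmMask A X)⁻¹) v u := by
  have haij' : ∀ i j, A i j = A j i := fun i j => by
    have := congrFun (congrFun hA i) j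
    simpa [Matrix.transpose_apply] using this.symm
  have h1 : (dmMask A X)ᵀ *
        (Matrix.diagonal (fun e => if e ∈ X then (-1:K) else 1) * dmMask A Xᶜ)
      = (dmMask A Xᶜ)ᵀ *
        (Matrix.diagonal (fun e => if e ∈ X then (-1:K) else 1) * dmMask A X) := by
    ext a b
    rw [Matrix.mul_apply, Matrix.mul_apply]
    have lhs : ∀ g, (dmMask A X)ᵀ a g *
        (Matrix.diagonal (fun e => if e ∈ X then (-1:K) else 1) * dmMask A Xᶜ) g b =
        (if g = b then (if b ∈ X then -(A b a) else 0) else 0)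
          + (if g = a then (if a ∈ X then 0 else A a b) else 0) := by
      intro g
      rw [Matrix.transpose_apply, Matrix.diagonal_mul]
      have := dm_entry_lhs A haij' X a b g
      simpa [dmMask, Finset.mem_compl] using this
    have rhs : ∀ g, (dmMask A Xᶜ)ᵀ a g *
        (Matrix.diagonal (fun e => if e ∈ X then (-1:K) else 1) * dmMask A X) g b =
        (if g = a then (if a ∈ X then -(A a b) else 0) else 0)
          + (if g = b then (if b ∈ X then 0 else A b a) else 0) := by
      intro g
      rw [Matrix.transpose_apply, Matrix.diagonal_mul]
      have h2 : (if g ∈ X then A g b else if g = b then (1:K) else 0) *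
          ((if g ∈ X then (-1:K) else 1) *
            (if g ∉ X then A g a else if g = a then (1:K) else 0)) =
          (if g = a then (if a ∈ X then -(A a b) else 0) else 0)
            + (if g = b then (if b ∈ X then 0 else A b a) else 0) := by
        exact dm_entry_lhs A haij' X b a g
      calc (dmMask A Xᶜ) g a *
            ((if g ∈ X then (-1:K) else 1) * dmMask A X g b)
          = (if g ∈ X then A g b else if g = b then (1:K) else 0) *
            ((if g ∈ X then (-1:K) else 1) *
              (if g ∉ X then A g a else if g = a then (1:K) else 0)) := by
            simp only [dmMask, Matrix.of_apply, Finset.mem_compl]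
            ring
        _ = _ := h2
    rw [Finset.sum_congr rfl fun g _ => lhs g, Finset.sum_congr rfl fun g _ => rhs g,
      Finset.sum_add_distrib, Finset.sum_add_distrib, Finset.sum_ite_eq',
      Finset.sum_ite_eq', Finset.sum_ite_eq', Finset.sum_ite_eq']
    simp only [Finset.mem_univ, if_true]
    by_cases ha : a ∈ X <;> by_cases hb : b ∈ X <;>
      simp [ha, hb, haij' a b] <;> ring
  have hMt : IsUnit ((dmMask A X)ᵀ).det := by rwa [Matrix.det_transpose]
  have hCM : (dmMask A Xᶜ * (dmMask A X)⁻¹) * dmMask A X = dmMask A Xᶜ := by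
    rw [Matrix.mul_assoc, Matrix.nonsing_inv_mul _ hX, Matrix.mul_one]
  have hCt : (dmMask A Xᶜ * (dmMask A X)⁻¹)ᵀ = ((dmMask A X)ᵀ)⁻¹ * (dmMask A Xᶜ)ᵀ := by
    rw [Matrix.transpose_mul, Matrix.transpose_nonsing_inv]
  set M : Matrix E E K := dmMask A X
  set N : Matrix E E K := dmMask A Xᶜ
  set P : Matrix E E K := Matrix.diagonal (fun e => if e ∈ X then (-1:K) else 1) with hP
  have h2 : (P * (N * M⁻¹)) * M = (((N * M⁻¹)ᵀ) * P) * M := by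
    calc (P * (N * M⁻¹)) * M = P * ((N * M⁻¹) * M) := by rw [Matrix.mul_assoc]
      _ = P * N := by rw [hCM]
      _ = Mᵀ⁻¹ * (Mᵀ * (P * N)) := by
          rw [← Matrix.mul_assoc, Matrix.nonsing_inv_mul _ hMt, Matrix.one_mul]
      _ = Mᵀ⁻¹ * (Nᵀ * (P * M)) := by rw [h1]
      _ = (((N * M⁻¹)ᵀ) * P) * M := by rw [hCt]; noncomm_ring
  have h3 : P * (N * M⁻¹) = ((N * M⁻¹)ᵀ) * P := by
    calc P * (N * M⁻¹) = (P * (N * M⁻¹)) * (M * M⁻¹) := by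
          rw [Matrix.mul_nonsing_inv _ hX, Matrix.mul_one]
      _ = ((P * (N * M⁻¹)) * M) * M⁻¹ := by noncomm_ring
      _ = ((((N * M⁻¹)ᵀ) * P) * M) * M⁻¹ := by rw [h2]
      _ = (((N * M⁻¹)ᵀ) * P) * (M * M⁻¹) := by noncomm_ring
      _ = ((N * M⁻¹)ᵀ) * P := by rw [Matrix.mul_nonsing_inv _ hX, Matrix.mul_one]
  have h4 := congrFun (congrFun h3 u) v
  rw [hP, Matrix.diagonal_mul, Matrix.mul_diagonal, Matrix.transpose_apply] at h4
  rw [h4, mul_comm]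

end Aux

open Matrix in
/-- `D(𝐀)` is a delta-matroid for any symmetric matrix `𝐀` over a field. -/
theorem matFeasible_isDeltaMatroid {E : Type*} [Fintype E] [DecidableEq E]
    {K : Type*} [Field K] (A : Matrix E E K) (hA : A.IsSymm) :
    IsDeltaMatroid (Finset.univ : Finset E) (matFeasible A) := by
  classical
  refine ⟨⟨∅, ?_⟩, fun X _ => Finset.subset_univ X, ?_⟩
  · show (A.submatrix (fun i : (∅ : Finset E) => (i : E))
      (fun j : (∅ : Finset E) => (j : E))).det ≠ 0
    rw [Matrix.det_isEmpty]
    exact one_ne_zero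
  · intro X hX Y hY u hu
    have hXdet : (dmMask A X).det ≠ 0 := (dmMask_det_iff A X).mpr hX
    have hXu : IsUnit (dmMask A X).det := isUnit_iff_ne_zero.mpr hXdet
    set C : Matrix E E K := dmMask A Xᶜ * (dmMask A X)⁻¹ with hC
    have key : ∀ Z : Finset E, (X ∆ Z ∈ matFeasible A) ↔ (dmMask C Z).det ≠ 0 := by
      intro Z
      rw [show (X ∆ Z ∈ matFeasible A) ↔ (dmMask A (X ∆ Z)).det ≠ 0 from
        (dmMask_det_iff A (X ∆ Z)).symm]
      have hprod : (dmMask C Z).det * (dmMask A X).det = (dmMask A (X ∆ Z)).det := by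
        rw [← Matrix.det_mul, hC, dmMask_mul A X Z hXu]
      constructor
      · intro h hz
        rw [← hprod] at h
        exact h (by rw [hz, zero_mul])
      · intro h
        rw [← hprod]
        exact mul_ne_zero h hXdet
    have hzero : ∀ a b : E, C a b = 0 → C b a = 0 := by
      intro a b hab
      have hs := dmMask_sign A hA X hXu a b
      rw [← hC] at hs
      rw [hab, mul_zero] at hs
      rcases mul_eq_zero.mp hs.symm with h | h
      · exact absurd h (by by_cases hbx : b ∈ X <;> simp [hbx])
      · exact h
    have hY' : (dmMask C (X ∆ Y)).det ≠ 0 := by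
      rw [← key]
      rwa [symmDiff_symmDiff_cancel_left]
    by_cases h0 : C u u = 0
    · have hrow : ∃ v ∈ X ∆ Y, C v u ≠ 0 := by
        by_contra hall
        push_neg at hall
        rw [dm_det_ne_zero_iff_ker] at hY'
        have hker : dmMask C (X ∆ Y) *ᵥ Pi.single u 1 = 0 := by
          funext e
          rw [Pi.zero_apply, dmMask_mulVec]
          by_cases he : e ∈ X ∆ Y
          · rw [if_pos he, Matrix.mulVec_single]
            show C e u * 1 = 0
            rw [mul_one]
            exact hall e he
          · rw [if_neg he, Pi.single_apply, if_neg (fun h : e = u => he (h ▸ hu))]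
        have h1 := congrFun (hY' _ hker) u
        simp [Pi.single_apply] at h1
      obtain ⟨v, hv, hvu⟩ := hrow
      have huv : C u v ≠ 0 := fun h => hvu (hzero u v h)
      have hvne : v ≠ u := fun h => hvu (by rw [h]; exact h0)
      refine ⟨v, hv, ?_⟩
      rw [key]
      rw [dm_det_ne_zero_iff_ker]
      intro x hx
      have hout : ∀ e, e ∉ ({u, v} : Finset E) → x e = 0 := by
        intro e he
        have h1 := congrFun hx e
        rwa [Pi.zero_apply, dmMask_mulVec, if_neg he] at h1
      have hsum : ∀ a : E, (C *ᵥ x) a = C a u * x u + C a v * x v := by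
        intro a
        simp only [Matrix.mulVec, dotProduct]
        rw [← Finset.sum_subset (Finset.subset_univ ({u, v} : Finset E))
          (fun f _ hf => by rw [hout f hf, mul_zero])]
        rw [Finset.sum_pair (Ne.symm hvne)]
      have hentry : ∀ a, a ∈ ({u, v} : Finset E) → C a u * x u + C a v * x v = 0 := by
        intro a ha
        have h1 := congrFun hx a
        rwa [Pi.zero_apply, dmMask_mulVec, if_pos ha, hsum a] at h1
      have hxv : x v = 0 := by
        have h1 := hentry u (Finset.mem_insert_self u {v})
        rw [h0, zero_mul, zero_add] at h1
        exact (mul_eq_zero.mp h1).resolve_left huv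
      have hxu : x u = 0 := by
        have h1 := hentry v (Finset.mem_insert_of_mem (Finset.mem_singleton_self v))
        rw [hxv, mul_zero, add_zero] at h1
        exact (mul_eq_zero.mp h1).resolve_left hvu
      funext e
      by_cases he : e ∈ ({u, v} : Finset E)
      · rcases Finset.mem_insert.mp he with h | h
        · rw [h]; exact hxu
        · rw [Finset.mem_singleton.mp h]; exact hxv
      · exact hout e he
    · refine ⟨u, hu, ?_⟩
      have hpair : ({u, u} : Finset E) = {u} := by simp
      rw [hpair, key, dm_det_ne_zero_iff_ker]
      intro x hx
      have hout : ∀ e, e ∉ ({u} : Finset E) → x e = 0 := by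
        intro e he
        have h1 := congrFun hx e
        rwa [Pi.zero_apply, dmMask_mulVec, if_neg he] at h1
      have hsum : (C *ᵥ x) u = C u u * x u := by
        simp only [Matrix.mulVec, dotProduct]
        rw [Finset.sum_eq_single u
          (fun f _ hf => by rw [hout f (by simp [hf]), mul_zero])
          (fun h => absurd (Finset.mem_univ u) h)]
      have h1 := congrFun hx u
      rw [Pi.zero_apply, dmMask_mulVec, if_pos (Finset.mem_singleton_self u), hsum] at h1
      have hxu : x u = 0 := (mul_eq_zero.mp h1).resolve_left h0
      funext e
      by_cases he : e = u
      · rw [he]; exact hxu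
      · exact hout e (by simp [he])
end

section
/- Let E be a finite set and let ℱ be a nonempty collection of subsets of E, all of the same cardinality. Then the set system (E, ℱ) satisfies the Symmetric Exchange Axiom if and only if ℱ is the collection of bases of a matroid on ground set E. -/
/-!
Statement 7: A nonempty collection `ℱ` of subsets of `E`, all of the same cardinality,
satisfies the Symmetric Exchange Axiom iff `ℱ` is the collection of bases of a matroid
on `E`, i.e. iff it satisfies the basis exchange property.
-/

open scoped symmDiff

variable {α : Type*} [DecidableEq α]

/-- Basis exchange implies the "co-exchange" property, by induction on `(Y \ X).card`. -/
lemma coexchange_aux (F : Set (Finset α))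
    (hcard : ∀ X ∈ F, ∀ Y ∈ F, X.card = Y.card)
    (hex : ∀ B₁ ∈ F, ∀ B₂ ∈ F, ∀ x ∈ B₁ \ B₂, ∃ y ∈ B₂ \ B₁,
        insert y (B₁.erase x) ∈ F) :
    ∀ n (X : Finset α), X ∈ F → ∀ Y ∈ F, (Y \ X).card ≤ n → ∀ u ∈ Y \ X,
      ∃ v ∈ X \ Y, insert u (X.erase v) ∈ F := by
  intro n
  induction n with
  | zero =>
    intro X hX Y hY hle u hu
    rw [Nat.le_zero, Finset.card_eq_zero] at hle
    simp [hle] at hu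
  | succ n ih =>
    intro X hX Y hY hle u hu
    rcases eq_or_lt_of_le (Finset.one_le_card.mpr ⟨u, hu⟩) with h1 | h1
    · -- (Y \ X).card = 1
      have hYX : Y \ X = {u} := by
        obtain ⟨a, ha⟩ := Finset.card_eq_one.mp h1.symm
        have hua : u = a := by rw [ha] at hu; simpa using hu
        rw [ha, hua]
      have hXc : (X \ Y).card = 1 := by
        have e1 : (X \ Y).card + (X ∩ Y).card = X.card := Finset.card_sdiff_add_card_inter X Y
        have e2 : (Y \ X).card + (Y ∩ X).card = Y.card := Finset.card_sdiff_add_card_inter Y X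
        have := hcard X hX Y hY
        rw [Finset.inter_comm] at e2
        omega
      rcases Finset.card_eq_one.mp hXc with ⟨v, hv⟩
      have hvXY : v ∈ X \ Y := by rw [hv]; simp
      refine ⟨v, hvXY, ?_⟩
      have hEq : insert u (X.erase v) = Y := by
        have h2 : ∀ a, a ∈ Y ∧ a ∉ X ↔ a = u := by
          intro a; rw [← Finset.mem_sdiff, hYX]; simp
        have h3 : ∀ a, a ∈ X ∧ a ∉ Y ↔ a = v := by
          intro a; rw [← Finset.mem_sdiff, hv]; simp
        ext a
        have := h2 a; have := h3 a
        simp only [Finset.mem_insert, Finset.mem_erase] at *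
        by_cases hau : a = u <;> by_cases hav : a = v <;> tauto
      rw [hEq]; exact hY
    · -- (Y \ X).card ≥ 2 : pick w ≠ u in Y \ X and exchange it away
      obtain ⟨w, hw, hwu⟩ := Finset.exists_mem_ne h1 u
      obtain ⟨z, hz, hY'⟩ := hex Y hY X hX w hw
      set Y' := insert z (Y.erase w) with hY'def
      have hzX : z ∈ X := (Finset.mem_sdiff.mp hz).1
      have hzY : z ∉ Y := (Finset.mem_sdiff.mp hz).2
      have hwX : w ∉ X := (Finset.mem_sdiff.mp hw).2
      have hd : Y' \ X = (Y \ X).erase w := by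
        ext a
        simp only [hY'def, Finset.mem_sdiff, Finset.mem_insert, Finset.mem_erase]
        constructor
        · rintro ⟨h | h, haX⟩
          · exact absurd (h ▸ hzX) haX
          · exact ⟨h.1, h.2, haX⟩
        · rintro ⟨haw, haY, haX⟩
          exact ⟨Or.inr ⟨haw, haY⟩, haX⟩
      have hle' : (Y' \ X).card ≤ n := by
        rw [hd, Finset.card_erase_of_mem hw]
        omega
      have huY' : u ∈ Y' \ X := by
        rw [hd, Finset.mem_erase]
        exact ⟨Ne.symm hwu, hu⟩
      obtain ⟨v, hv, hins⟩ := ih X hX Y' hY' hle' u huY'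
      refine ⟨v, ?_, hins⟩
      rw [Finset.mem_sdiff] at hv ⊢
      refine ⟨hv.1, fun hvY => hv.2 ?_⟩
      simp only [hY'def, Finset.mem_insert, Finset.mem_erase]
      have : v ≠ w := fun h => hwX (h ▸ hv.1)
      exact Or.inr ⟨this, hvY⟩

/-- For a nonempty equicardinal collection of subsets of `E`, the Symmetric Exchange
Axiom is equivalent to the basis exchange property of matroids. -/
theorem satisfiesSEA_iff_basisExchange (E : Finset α) (F : Set (Finset α))
    (hne : F.Nonempty) (hsub : ∀ X ∈ F, X ⊆ E)
    (hcard : ∀ X ∈ F, ∀ Y ∈ F, X.card = Y.card) :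
    SatisfiesSEA F ↔
      ∀ B₁ ∈ F, ∀ B₂ ∈ F, ∀ x ∈ B₁ \ B₂, ∃ y ∈ B₂ \ B₁,
        insert y (B₁.erase x) ∈ F := by
  constructor
  · intro hsea B₁ hB₁ B₂ hB₂ x hx
    rw [Finset.mem_sdiff] at hx
    have hxsd : x ∈ B₁ ∆ B₂ := Finset.mem_symmDiff.mpr (Or.inl ⟨hx.1, hx.2⟩)
    obtain ⟨v, hv, hmem⟩ := hsea B₁ hB₁ B₂ hB₂ x hxsd
    rw [Finset.mem_symmDiff] at hv
    rcases hv with ⟨hvB₁, hvB₂⟩ | ⟨hvB₂, hvB₁⟩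
    · -- v ∈ B₁ \ B₂ : contradiction via cardinality
      exfalso
      have hss : B₁ ∆ ({x, v} : Finset α) ⊂ B₁ := by
        constructor
        · intro a ha
          rw [Finset.mem_symmDiff] at ha
          rcases ha with ⟨h, _⟩ | ⟨h, hna⟩
          · exact h
          · rcases Finset.mem_insert.mp h with rfl | h
            · exact absurd hx.1 hna
            · exact absurd (Finset.mem_singleton.mp h ▸ hvB₁) hna
        · intro hsup
          have : x ∈ B₁ ∆ ({x, v} : Finset α) := hsup hx.1
          rw [Finset.mem_symmDiff] at this
          simp at this
          exact this hx.1
      have := hcard (B₁ ∆ ({x, v} : Finset α)) hmem B₁ hB₁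
      exact absurd this (Nat.ne_of_lt (Finset.card_lt_card hss))
    · refine ⟨v, Finset.mem_sdiff.mpr ⟨hvB₂, hvB₁⟩, ?_⟩
      have hxv : x ≠ v := fun h => hvB₁ (h ▸ hx.1)
      have hEq : B₁ ∆ ({x, v} : Finset α) = insert v (B₁.erase x) := by
        ext a
        rw [Finset.mem_symmDiff]
        simp only [Finset.mem_insert, Finset.mem_erase, Finset.mem_singleton]
        rcases eq_or_ne a x with rfl | h1 <;> rcases eq_or_ne a v with rfl | h2 <;>
          simp_all <;> tauto
      rw [← hEq]; exact hmem
  · intro hex X hX Y hY u hu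
    rw [Finset.mem_symmDiff] at hu
    rcases hu with ⟨huX, huY⟩ | ⟨huY, huX⟩
    · obtain ⟨v, hv, hmem⟩ := hex X hX Y hY u (Finset.mem_sdiff.mpr ⟨huX, huY⟩)
      rw [Finset.mem_sdiff] at hv
      refine ⟨v, Finset.mem_symmDiff.mpr (Or.inr ⟨hv.1, hv.2⟩), ?_⟩
      have huv : u ≠ v := fun h => hv.2 (h ▸ huX)
      have hEq : X ∆ ({u, v} : Finset α) = insert v (X.erase u) := by
        ext a
        rw [Finset.mem_symmDiff]
        simp only [Finset.mem_insert, Finset.mem_erase, Finset.mem_singleton]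
        rcases eq_or_ne a u with rfl | h1 <;> rcases eq_or_ne a v with rfl | h2 <;>
          simp_all <;> tauto
      rw [hEq]; exact hmem
    · obtain ⟨v, hv, hmem⟩ := coexchange_aux F hcard hex (Y \ X).card X hX Y hY le_rfl u
        (Finset.mem_sdiff.mpr ⟨huY, huX⟩)
      rw [Finset.mem_sdiff] at hv
      refine ⟨v, Finset.mem_symmDiff.mpr (Or.inl ⟨hv.1, hv.2⟩), ?_⟩
      have huv : u ≠ v := fun h => huX (h ▸ hv.1)
      have hEq : X ∆ ({u, v} : Finset α) = insert u (X.erase v) := by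
        ext a
        rw [Finset.mem_symmDiff]
        simp only [Finset.mem_insert, Finset.mem_erase, Finset.mem_singleton]
        rcases eq_or_ne a u with rfl | h1 <;> rcases eq_or_ne a v with rfl | h2 <;>
          simp_all <;> tauto
      rw [hEq]; exact hmem
end

section
/- Let w be a double occurrence word with a decomposition w = w₁w₂w₃w₄ in which w₂ and w₄ form a share, and let w′ be any one of the three mutants w₁ w̄₂ w₃ w̄₄, w₁ w₄ w₃ w₂, or w₁ w̄₄ w₃ w̄₂ of w. Then w and w′ have the same alphabet and their intersection graphs are equal (in particular, isomorphic). -/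
set_option linter.unusedSectionVars false
set_option maxHeartbeats 1000000

/-!
Statement 11: If a double occurrence word `w` decomposes as `w = w₁w₂w₃w₄` where
`w₂` and `w₄` form a share, then each of the three mutants `w₁ w̄₂ w₃ w̄₄`,
`w₁ w₄ w₃ w₂`, `w₁ w̄₄ w₃ w̄₂` has the same alphabet as `w` and the same
intersection graph.
-/

variable {α : Type*} [DecidableEq α]

/-- `w` is a double occurrence word: each letter occurring in it occurs exactly
twice. -/
def IsDOW (w : List α) : Prop :=
  ∀ a ∈ w, w.count a = 2

/-- The letters `x` and `y` interleave in the cyclic word `w`: some cyclic rotation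
of `w` has the form `x u x v` where `y` occurs exactly once in `u`.  This is the
adjacency relation of the intersection graph of `w` (whose vertex set is the
alphabet of `w`). -/
def Interleaves (w : List α) (x y : α) : Prop :=
  ∃ (n : ℕ) (u v : List α), w.rotate n = [x] ++ u ++ [x] ++ v ∧ u.count y = 1

/-- the two-letter selection predicate -/
def mpb (x y : α) : α → Bool := fun a => decide (a = x) || decide (a = y)

@[simp] lemma mpb_left (x y : α) : mpb x y x = true := by simp [mpb]
@[simp] lemma mpb_right (x y : α) : mpb x y y = true := by simp [mpb]
lemma mpb_of_mem {x y b : α} (h : mpb x y b = true) : b = x ∨ b = y := by simpa [mpb] using h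

lemma mreverse_eq_self {l : List α} {a : α} (h : ∀ b ∈ l, b = a) : l.reverse = l := by
  have hrep := List.eq_replicate_of_mem h
  rw [hrep]; simp

lemma mfilter_rotate (p : α → Bool) (l : List α) (n : ℕ) :
    ∃ m, (l.rotate n).filter p = (l.filter p).rotate m := by
  refine ⟨((l.take (n % l.length)).filter p).length, ?_⟩
  have h2 : l.filter p
      = (l.take (n % l.length)).filter p ++ (l.drop (n % l.length)).filter p := by
    rw [← List.filter_append, List.take_append_drop]
  rw [List.rotate_eq_drop_append_take_mod, List.filter_append, h2,
    List.rotate_append_length_eq]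

lemma mfilter_eq_single {l : List α} {x y : α}
    (hx : l.count x = 0) (hy : l.count y = 1) : l.filter (mpb x y) = [y] := by
  have hmem : ∀ b ∈ l.filter (mpb x y), b = y := by
    intro b hb
    obtain ⟨hbl, hbp⟩ := List.mem_filter.mp hb
    rcases mpb_of_mem hbp with rfl | rfl
    · exact absurd hbl (List.count_eq_zero.mp hx)
    · rfl
  have hrep := List.eq_replicate_of_mem hmem
  have hlen : (l.filter (mpb x y)).length = 1 := by
    have hcy : (l.filter (mpb x y)).count y = 1 := by
      rw [List.count_filter (by simp)]; exact hy
    rw [hrep] at hcy ⊢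
    simpa using hcy
  rw [hrep, hlen]; rfl

lemma misRotated_pat_reverse (l : List α) (x y : α) :
    l.reverse ~r [x,y,x,y] ↔ l ~r [x,y,x,y] := by
  have key : ∀ l : List α, l ~r [x,y,x,y] → l.reverse ~r [x,y,x,y] := by
    intro l h
    have h2 := h.reverse
    simp only [List.reverse_cons, List.reverse_nil, List.nil_append, List.cons_append,
      List.append_nil] at h2
    exact h2.trans ⟨1, by simp [List.rotate_cons_succ]⟩
  constructor
  · intro h
    have := key _ h
    rwa [List.reverse_reverse] at this
  · exact key l


lemma mpat_rotate (x y : α) (k : ℕ) :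
    ([x,y,x,y] : List α).rotate k = [x,y,x,y] ∨ ([x,y,x,y] : List α).rotate k = [y,x,y,x] := by
  rw [← List.rotate_mod]
  have hlen : ([x,y,x,y] : List α).length = 4 := rfl
  have h4 : k % ([x,y,x,y] : List α).length < 4 := by rw [hlen]; omega
  set r := k % ([x,y,x,y] : List α).length with hr
  interval_cases r
  · left; rfl
  · right; rw [List.rotate_eq_drop_append_take (by simp)]; rfl
  · left; rw [List.rotate_eq_drop_append_take (by simp)]; rfl
  · right; rw [List.rotate_eq_drop_append_take (by simp)]; rfl

lemma interleaves_iff (w : List α) (hw : IsDOW w) (x y : α) :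
    Interleaves w x y ↔ x ≠ y ∧ (w.filter (mpb x y)) ~r [x,y,x,y] := by
  constructor
  · rintro ⟨n, u, v, hrot, hu⟩
    have hxw : x ∈ w := by
      have : x ∈ w.rotate n := by rw [hrot]; simp
      exact List.mem_rotate.mp this
    have hcx : (w.rotate n).count x = 2 := by
      rw [(List.rotate_perm w n).count_eq]; exact hw x hxw
    rw [hrot] at hcx
    simp only [List.count_append, List.count_singleton] at hcx
    have hux : u.count x = 0 := by
      by_cases h : x = x
      · simp [h] at hcx; omega
      · exact absurd rfl h
    have hvx : v.count x = 0 := by simp at hcx; omega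
    have hxy : x ≠ y := by
      rintro rfl
      rw [hu] at hux; exact one_ne_zero hux
    have hyw : y ∈ w := by
      have hyu : y ∈ u := List.count_pos_iff.mp (by omega)
      have : y ∈ w.rotate n := by rw [hrot]; simp [hyu]
      exact List.mem_rotate.mp this
    have hcy : (w.rotate n).count y = 2 := by
      rw [(List.rotate_perm w n).count_eq]; exact hw y hyw
    rw [hrot] at hcy
    simp only [List.count_append, List.count_singleton] at hcy
    have hvy : v.count y = 1 := by
      have : ([x] : List α).count y = 0 := by simp [List.count_singleton, hxy.symm, hxy]
      simp [List.count_singleton, (Ne.symm hxy)] at hcy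
      omega
    refine ⟨hxy, ?_⟩
    obtain ⟨m, hm⟩ := mfilter_rotate (mpb x y) w n
    refine ⟨m, ?_⟩
    rw [← hm, hrot]
    simp only [List.filter_append]
    rw [mfilter_eq_single hux hu, mfilter_eq_single hvx hvy]
    simp [List.filter_cons]
  · rintro ⟨hxy, hrtd⟩
    have hxw : x ∈ w := by
      have : x ∈ w.filter (mpb x y) := hrtd.mem_iff.mpr (by simp)
      exact (List.mem_filter.mp this).1
    obtain ⟨s, t, rfl⟩ := List.append_of_mem hxw
    have hrot : (s ++ x :: t).rotate s.length = x :: (t ++ s) := by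
      rw [List.rotate_append_length_eq]; rfl
    obtain ⟨m', hm'⟩ := mfilter_rotate (mpb x y) (s ++ x :: t) s.length
    have hr2 : ((s ++ x :: t).filter (mpb x y)).rotate m' ~r [x,y,x,y] :=
      (List.IsRotated.forall _ m').trans hrtd
    obtain ⟨k, hk⟩ := hr2.symm
    rw [← hm', hrot] at hk
    have hfil : (x :: (t ++ s)).filter (mpb x y) = x :: (t ++ s).filter (mpb x y) := by
      simp [List.filter_cons]
    rcases mpat_rotate x y k with h | h <;> rw [h] at hk
    · rw [hfil] at hk
      have hts : (t ++ s).filter (mpb x y) = [y, x, y] := by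
        have h2 := hk.symm
        rw [List.cons.injEq] at h2
        exact h2.2
      obtain ⟨l₁, l₂, he, h₁, _, h₂⟩ := List.filter_eq_cons_iff.mp hts
      obtain ⟨m₁, m₂, he2, hm₁, _, hm₂⟩ := List.filter_eq_cons_iff.mp h₂
      refine ⟨s.length, l₁ ++ y :: m₁, m₂, ?_, ?_⟩
      · rw [hrot, he, he2]; try simp
      · have hfu : (l₁ ++ y :: m₁).filter (mpb x y) = [y] := by
          simp [List.filter_append, List.filter_cons, List.filter_eq_nil_iff.mpr h₁,
            List.filter_eq_nil_iff.mpr hm₁]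
        have := List.count_filter (l := l₁ ++ y :: m₁) (p := mpb x y) (a := y) (by simp)
        rw [hfu] at this
        simpa using this.symm
    · exfalso
      rw [hfil] at hk
      rw [List.cons.injEq] at hk
      exact hxy hk.1.symm

lemma mcongr {l l' pat : List α} (h : l ~r l') : l ~r pat ↔ l' ~r pat :=
  ⟨fun g => h.symm.trans g, fun g => h.trans g⟩

lemma mswap {f₁ f₂ f₃ f₄ : List α} {x y : α}
    (r1 : f₁.reverse = f₁) (r2 : f₂.reverse = f₂) (r3 : f₃.reverse = f₃)
    (r4 : f₄.reverse = f₄) :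
    (f₁++(f₂++(f₃++f₄))) ~r [x,y,x,y] ↔ (f₁++(f₄++(f₃++f₂))) ~r [x,y,x,y] := by
  rw [← misRotated_pat_reverse (f₁++(f₂++(f₃++f₄))) x y]
  apply mcongr
  have hrev : (f₁++(f₂++(f₃++f₄))).reverse = (f₄++(f₃++f₂))++f₁ := by
    simp [List.reverse_append, r1, r2, r3, r4, List.append_assoc]
  rw [hrev]
  simpa [List.append_assoc] using List.isRotated_append (l := f₄++(f₃++f₂)) (l' := f₁)


/-- Mutation preserves the alphabet and the intersection graph. -/
theorem mutant_interleaves_eq (w w₁ w₂ w₃ w₄ : List α) (hw : IsDOW w)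
    (hdec : w = w₁ ++ w₂ ++ w₃ ++ w₄)
    (hshare : ∀ a ∈ w₂ ++ w₄, (w₂ ++ w₄).count a = 2)
    (w' : List α)
    (hmut : w' = w₁ ++ w₂.reverse ++ w₃ ++ w₄.reverse ∨
            w' = w₁ ++ w₄ ++ w₃ ++ w₂ ∨
            w' = w₁ ++ w₄.reverse ++ w₃ ++ w₂.reverse) :
    w.toFinset = w'.toFinset ∧
      ∀ x y : α, Interleaves w x y ↔ Interleaves w' x y := by
  have hperm : List.Perm w w' := by
    rw [List.perm_iff_count]
    intro a
    rcases hmut with rfl | rfl | rfl <;>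
      simp only [hdec, List.count_append, List.count_reverse] <;> omega
  have hw' : IsDOW w' := by
    intro a ha
    rw [← hperm.count_eq]
    exact hw a (hperm.mem_iff.mpr ha)
  refine ⟨List.toFinset_eq_of_perm _ _ hperm, ?_⟩
  intro x y
  rw [interleaves_iff w hw x y, interleaves_iff w' hw' x y]
  apply and_congr_right
  intro hxy
  -- dichotomy from the share condition
  have key : ∀ a : α, (a ∉ w₂ ∧ a ∉ w₄) ∨ (a ∉ w₁ ∧ a ∉ w₃) := by
    intro a
    by_cases hm : a ∈ w₂ ++ w₄
    · right
      have h2 := hshare a hm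
      have haw : a ∈ w := by
        rw [hdec]; simp only [List.mem_append] at hm ⊢; tauto
      have h4 := hw a haw
      rw [hdec] at h4
      simp only [List.count_append] at h4 h2
      exact ⟨List.count_eq_zero.mp (by omega), List.count_eq_zero.mp (by omega)⟩
    · left
      simp only [List.mem_append] at hm
      exact ⟨fun h => hm (Or.inl h), fun h => hm (Or.inr h)⟩
  have hfw : w.filter (mpb x y)
      = w₁.filter (mpb x y) ++ (w₂.filter (mpb x y) ++ (w₃.filter (mpb x y)
        ++ w₄.filter (mpb x y))) := by
    rw [hdec]; simp [List.filter_append, List.append_assoc]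
  -- a helper to produce empty filters
  have hnil : ∀ u : List α, x ∉ u → y ∉ u → u.filter (mpb x y) = [] := by
    intro u hxu hyu
    refine List.filter_eq_nil_iff.mpr ?_
    intro b hb hpb
    rcases mpb_of_mem hpb with rfl | rfl
    · exact hxu hb
    · exact hyu hb
  have hconst : ∀ (u : List α) (a b : α), b ∉ u →
      (∀ c ∈ u.filter (mpb a b), c = a) ∧ (∀ c ∈ u.filter (mpb b a), c = a) := by
    intro u a b hbu
    constructor <;>
    · intro c hc
      obtain ⟨hcu, hcp⟩ := List.mem_filter.mp hc
      rcases mpb_of_mem hcp with rfl | rfl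
      · first | rfl | exact absurd hcu hbu
      · first | rfl | exact absurd hcu hbu
  rcases key x with hx | hx <;> rcases key y with hy | hy
  · -- both letters avoid the share: all mutants have the same filtered word
    have e2 := hnil w₂ hx.1 hy.1
    have e4 := hnil w₄ hx.2 hy.2
    have heq : w'.filter (mpb x y) = w.filter (mpb x y) := by
      rcases hmut with rfl | rfl | rfl <;>
        simp [hdec, List.filter_append, List.filter_reverse, e2, e4, List.append_assoc]
    rw [heq]
  · -- x avoids the share, y lives in the share: mixed case
    have r1 : (w₁.filter (mpb x y)).reverse = w₁.filter (mpb x y) :=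
      mreverse_eq_self ((hconst w₁ x y hy.1).1)
    have r3 : (w₃.filter (mpb x y)).reverse = w₃.filter (mpb x y) :=
      mreverse_eq_self ((hconst w₃ x y hy.2).1)
    have r2 : (w₂.filter (mpb x y)).reverse = w₂.filter (mpb x y) :=
      mreverse_eq_self ((hconst w₂ y x hx.1).2)
    have r4 : (w₄.filter (mpb x y)).reverse = w₄.filter (mpb x y) :=
      mreverse_eq_self ((hconst w₄ y x hx.2).2)
    rw [hfw]
    rcases hmut with rfl | rfl | rfl
    · have hm : (w₁ ++ w₂.reverse ++ w₃ ++ w₄.reverse).filter (mpb x y)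
          = w₁.filter (mpb x y) ++ (w₂.filter (mpb x y) ++ (w₃.filter (mpb x y)
            ++ w₄.filter (mpb x y))) := by
        simp [List.filter_append, List.filter_reverse, r2, r4, List.append_assoc]
      rw [hm]
    · have hm : (w₁ ++ w₄ ++ w₃ ++ w₂).filter (mpb x y)
          = w₁.filter (mpb x y) ++ (w₄.filter (mpb x y) ++ (w₃.filter (mpb x y)
            ++ w₂.filter (mpb x y))) := by
        simp [List.filter_append, List.append_assoc]
      rw [hm]
      exact mswap r1 r2 r3 r4
    · have hm : (w₁ ++ w₄.reverse ++ w₃ ++ w₂.reverse).filter (mpb x y)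
          = w₁.filter (mpb x y) ++ (w₄.filter (mpb x y) ++ (w₃.filter (mpb x y)
            ++ w₂.filter (mpb x y))) := by
        simp [List.filter_append, List.filter_reverse, r2, r4, List.append_assoc]
      rw [hm]
      exact mswap r1 r2 r3 r4
  · -- y avoids the share, x lives in the share: mixed case
    have r1 : (w₁.filter (mpb x y)).reverse = w₁.filter (mpb x y) :=
      mreverse_eq_self ((hconst w₁ y x hx.1).2)
    have r3 : (w₃.filter (mpb x y)).reverse = w₃.filter (mpb x y) :=
      mreverse_eq_self ((hconst w₃ y x hx.2).2)
    have r2 : (w₂.filter (mpb x y)).reverse = w₂.filter (mpb x y) :=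
      mreverse_eq_self ((hconst w₂ x y hy.1).1)
    have r4 : (w₄.filter (mpb x y)).reverse = w₄.filter (mpb x y) :=
      mreverse_eq_self ((hconst w₄ x y hy.2).1)
    rw [hfw]
    rcases hmut with rfl | rfl | rfl
    · have hm : (w₁ ++ w₂.reverse ++ w₃ ++ w₄.reverse).filter (mpb x y)
          = w₁.filter (mpb x y) ++ (w₂.filter (mpb x y) ++ (w₃.filter (mpb x y)
            ++ w₄.filter (mpb x y))) := by
        simp [List.filter_append, List.filter_reverse, r2, r4, List.append_assoc]
      rw [hm]
    · have hm : (w₁ ++ w₄ ++ w₃ ++ w₂).filter (mpb x y)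
          = w₁.filter (mpb x y) ++ (w₄.filter (mpb x y) ++ (w₃.filter (mpb x y)
            ++ w₂.filter (mpb x y))) := by
        simp [List.filter_append, List.append_assoc]
      rw [hm]
      exact mswap r1 r2 r3 r4
    · have hm : (w₁ ++ w₄.reverse ++ w₃ ++ w₂.reverse).filter (mpb x y)
          = w₁.filter (mpb x y) ++ (w₄.filter (mpb x y) ++ (w₃.filter (mpb x y)
            ++ w₂.filter (mpb x y))) := by
        simp [List.filter_append, List.filter_reverse, r2, r4, List.append_assoc]
      rw [hm]
      exact mswap r1 r2 r3 r4
  · -- both letters live in the share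
    have e1 := hnil w₁ hx.1 hy.1
    have e3 := hnil w₃ hx.2 hy.2
    rw [hfw, e1, e3]
    simp only [List.nil_append]
    rcases hmut with rfl | rfl | rfl
    · have hm : (w₁ ++ w₂.reverse ++ w₃ ++ w₄.reverse).filter (mpb x y)
          = (w₄.filter (mpb x y) ++ w₂.filter (mpb x y)).reverse := by
        simp [List.filter_append, List.filter_reverse, e1, e3, List.reverse_append]
      rw [hm, misRotated_pat_reverse]
      exact mcongr List.isRotated_append
    · have hm : (w₁ ++ w₄ ++ w₃ ++ w₂).filter (mpb x y)
          = w₄.filter (mpb x y) ++ w₂.filter (mpb x y) := by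
        simp [List.filter_append, e1, e3]
      rw [hm]
      exact mcongr List.isRotated_append
    · have hm : (w₁ ++ w₄.reverse ++ w₃ ++ w₂.reverse).filter (mpb x y)
          = (w₂.filter (mpb x y) ++ w₄.filter (mpb x y)).reverse := by
        simp [List.filter_append, List.filter_reverse, e1, e3, List.reverse_append]
      rw [hm, misRotated_pat_reverse]
end
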